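/- If T is self-adjoint, then for every n ≥ 2, ker(I + T̃)ⁿ = {(f,g) : f, g ∈ ker(I + T)}, while ker(I + T̃) = {(f, f) : f ∈ ker(I + T)}. -/

import Mathlib

open ContinuousLinearMap
open scoped InnerProductSpace

private lemma key14 {K₁ : Type*}
    [NormedAddCommGroup K₁] [InnerProductSpace ℂ K₁] [FiniteDimensional ℂ K₁]
    (T : K₁ →L[ℂ] K₁) (hT : IsSelfAdjoint T) (g : K₁)
    (h : (g + T g) + T (g + T g) = 0) : T g = -g := by
  set v := g + T g with hv
  have hsym := (ContinuousLinearMap.isSelfAdjoint_iff_isSymmetric).mp hT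
  have hTv : T v = -v := by linear_combination (norm := abel) h
  have hzero : ⟪v, v⟫_ℂ = 0 := by
    calc ⟪v, v⟫_ℂ = ⟪g, v⟫_ℂ + ⟪T g, v⟫_ℂ := by rw [hv]; exact inner_add_left _ _ _
      _ = ⟪g, v⟫_ℂ + ⟪g, T v⟫_ℂ := by
        have h' : ⟪T g, v⟫_ℂ = ⟪g, T v⟫_ℂ := hsym g v
        rw [h']
      _ = ⟪g, v + T v⟫_ℂ := (inner_add_right _ _ _).symm
      _ = 0 := by rw [hTv, add_neg_cancel, inner_zero_right]
  have hv0 : v = 0 := inner_self_eq_zero.mp hzero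
  have : g + T g = 0 := hv0
  linear_combination (norm := abel) this

theorem stmt14 {K₁ : Type*}
    [NormedAddCommGroup K₁] [InnerProductSpace ℂ K₁] [FiniteDimensional ℂ K₁]
    (T : K₁ →L[ℂ] K₁) (hT : IsSelfAdjoint T)
    (Ttil : K₁ × K₁ →L[ℂ] K₁ × K₁)
    (hTtil : ∀ f g : K₁, Ttil (f, g) = (-g, f + (2:ℂ) • T g)) :
    (∀ n : ℕ, 2 ≤ n →
      {ψ : K₁ × K₁ | ((1 + Ttil) ^ n) ψ = 0}
        = {ψ : K₁ × K₁ | T ψ.1 = -ψ.1 ∧ T ψ.2 = -ψ.2}) ∧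
    {ψ : K₁ × K₁ | ψ + Ttil ψ = 0}
      = {ψ : K₁ × K₁ | ∃ f : K₁, T f = -f ∧ ψ = (f, f)} := by
  have hS : ∀ f g : K₁, (1 + Ttil) (f, g) = (f - g, f + g + (2:ℂ) • T g) := by
    intro f g
    rw [add_apply, ContinuousLinearMap.one_apply, hTtil, Prod.ext_iff]
    constructor
    · show f + -g = f - g; abel
    · show g + (f + (2:ℂ) • T g) = f + g + (2:ℂ) • T g; abel
  have hE2 : ∀ f g : K₁, T f = -f → T g = -g → (1 + Ttil) ((1 + Ttil) (f, g)) = 0 := by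
    intro f g hf hg
    rw [hS, hS, Prod.ext_iff]
    constructor
    · show (f - g) - (f + g + (2:ℂ) • T g) = 0
      rw [hg]; module
    · show (f - g) + (f + g + (2:ℂ) • T g) + (2:ℂ) • T (f + g + (2:ℂ) • T g) = 0
      rw [map_add, map_add, map_smul, hf, hg, map_neg, hg]
      module
  have hker2 : ∀ f g : K₁, (1 + Ttil) ((1 + Ttil) (f, g)) = 0 → T f = -f ∧ T g = -g := by
    intro f g h
    rw [hS, hS, Prod.ext_iff] at h
    obtain ⟨h1, h2⟩ := h
    have h1' : (f - g) - (f + g + (2:ℂ) • T g) = 0 := h1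
    have h2' : (f - g) + (f + g + (2:ℂ) • T g) + (2:ℂ) • T (f + g + (2:ℂ) • T g) = 0 := h2
    have hg : T g = -g := by
      have e : (2:ℂ) • (g + T g) = 0 := by linear_combination (norm := module) -h1'
      rcases smul_eq_zero.mp e with h | h
      · norm_num at h
      · linear_combination (norm := abel) h
    have hf : T f = -f := by
      simp only [map_add, map_smul, map_neg, hg, neg_neg] at h2'
      have e : (2:ℂ) • (f + T f) = 0 := by linear_combination (norm := module) h2'
      rcases smul_eq_zero.mp e with h | h
      · norm_num at h
      · linear_combination (norm := abel) h
    exact ⟨hf, hg⟩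
  have hind : ∀ n : ℕ, ∀ ψ : K₁ × K₁, ((1 + Ttil) ^ (n + 2)) ψ = 0 →
      T ψ.1 = -ψ.1 ∧ T ψ.2 = -ψ.2 := by
    intro n
    induction n with
    | zero =>
      intro ψ h
      rw [pow_two, ContinuousLinearMap.mul_apply] at h
      exact hker2 ψ.1 ψ.2 h
    | succ n ih =>
      intro ψ h
      have h' : ((1 + Ttil) ^ (n + 2)) ((1 + Ttil) ψ) = 0 := by
        rw [show n + 1 + 2 = (n + 2) + 1 from rfl, pow_succ, ContinuousLinearMap.mul_apply] at h
        exact h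
      obtain ⟨ha, hb⟩ := ih ((1 + Ttil) ψ) h'
      obtain ⟨f, g⟩ := ψ
      rw [hS] at ha hb
      have ha' : T (f - g) = -(f - g) := ha
      have hb' : T (f + g + (2:ℂ) • T g) = -(f + g + (2:ℂ) • T g) := hb
      rw [map_sub] at ha'
      rw [map_add, map_add, map_smul] at hb'
      have hg : T g = -g := by
        apply key14 T hT
        have e : (2:ℂ) • ((g + T g) + T (g + T g)) = 0 := by
          rw [map_add]
          linear_combination (norm := module) hb' - ha'
        rcases smul_eq_zero.mp e with h | h
        · norm_num at h
        · exact h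
      have hf : T f = -f := by
        rw [hg] at ha'
        linear_combination (norm := abel) ha'
      exact ⟨hf, hg⟩
  constructor
  · intro n hn
    obtain ⟨m, rfl⟩ : ∃ m, n = m + 2 := ⟨n - 2, by omega⟩
    ext ψ
    simp only [Set.mem_setOf_eq]
    constructor
    · exact hind m ψ
    · rintro ⟨hf, hg⟩
      have h2 : ((1 + Ttil) ^ (2 : ℕ)) ψ = 0 := by
        rw [pow_two, ContinuousLinearMap.mul_apply]
        exact hE2 ψ.1 ψ.2 hf hg
      calc ((1 + Ttil) ^ (m + 2)) ψ
          = ((1 + Ttil) ^ m) (((1 + Ttil) ^ (2 : ℕ)) ψ) := by rw [pow_add, ContinuousLinearMap.mul_apply]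
        _ = 0 := by rw [h2, map_zero]
  · ext ψ
    simp only [Set.mem_setOf_eq]
    constructor
    · intro h
      obtain ⟨f, g⟩ := ψ
      have h' : (1 + Ttil) (f, g) = 0 := by
        rw [add_apply, ContinuousLinearMap.one_apply]; exact h
      rw [hS, Prod.ext_iff] at h'
      obtain ⟨h1, h2⟩ := h'
      have h1' : f - g = 0 := h1
      have h2' : f + g + (2:ℂ) • T g = 0 := h2
      have hfg : f = g := by linear_combination (norm := abel) h1'
      refine ⟨f, ?_, by rw [hfg]⟩
      subst hfg
      have e : (2:ℂ) • (f + T f) = 0 := by linear_combination (norm := module) h2'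
      rcases smul_eq_zero.mp e with h | h
      · norm_num at h
      · linear_combination (norm := abel) h
    · rintro ⟨v, hv, rfl⟩
      have : (1 + Ttil) (v, v) = 0 := by
        rw [hS, Prod.ext_iff]
        constructor
        · show v - v = 0; abel
        · show v + v + (2:ℂ) • T v = 0
          rw [hv]; module
      rw [add_apply, ContinuousLinearMap.one_apply] at this
      exact this
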